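/- Suppose ⟨f, {g_s}⟩ is an MDP homomorphism from M onto M' with each g_s surjective. Then for any ε ≥ 0 and any ε-optimal policy π' for M' (i.e., Q'*(s', π'(s')) ≥ V'*(s') − ε for all s'), any lifted policy π with g_s(π(s)) = π'(f(s)) satisfies Q*(s, π(s)) ≥ V*(s) − ε for all s ∈ S. -/
import Mathlib


open Finset
open scoped Classical

/-- Bellman optimality operator for a finite MDP. -/
noncomputable def Bop {S A : Type*} [Fintype S] [Fintype A] [Nonempty A]
    (T : S → A → S → ℝ) (R : S → A → ℝ) (γ : ℝ) (Q : S → A → ℝ) : S → A → ℝ :=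
  fun s a => R s a + γ * ∑ s' : S, T s a s' *
    (Finset.univ.sup' Finset.univ_nonempty (fun a' => Q s' a'))

lemma sup'_comp_surj {A A' : Type*} [Fintype A] [Fintype A'] [Nonempty A] [Nonempty A']
    (g : A → A') (hg : Function.Surjective g) (h : A' → ℝ) :
    Finset.univ.sup' Finset.univ_nonempty (fun a => h (g a)) =
    Finset.univ.sup' Finset.univ_nonempty h := by
  apply le_antisymm
  · exact Finset.sup'_le _ _ fun a _ => Finset.le_sup' h (Finset.mem_univ (g a))
  · apply Finset.sup'_le _ _ fun a' _ => ?_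
    obtain ⟨a, ha⟩ := hg a'
    calc h a' = h (g a) := by rw [ha]
      _ ≤ _ := Finset.le_sup' (fun a => h (g a)) (Finset.mem_univ a)

lemma abs_sup'_sub_sup'_le {A : Type*} [Fintype A] [Nonempty A] (f h : A → ℝ) (M : ℝ)
    (hM : ∀ a, |f a - h a| ≤ M) :
    |Finset.univ.sup' Finset.univ_nonempty f - Finset.univ.sup' Finset.univ_nonempty h| ≤ M := by
  rw [abs_sub_le_iff]
  constructor
  · rw [sub_le_iff_le_add]
    apply Finset.sup'_le
    intro a _
    have h1 : f a ≤ h a + M := by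
      have := abs_le.mp (hM a); linarith [this.2]
    exact h1.trans (by
      have := Finset.le_sup' h (Finset.mem_univ a); linarith)
  · rw [sub_le_iff_le_add]
    apply Finset.sup'_le
    intro a _
    have h1 : h a ≤ f a + M := by
      have := abs_le.mp (hM a); linarith [this.1]
    exact h1.trans (by
      have := Finset.le_sup' f (Finset.mem_univ a); linarith)

/-- An ε-optimal policy for the abstract MDP lifts through an MDP homomorphism to an
ε-optimal policy for the underlying MDP. -/
theorem lifted_policy_eps_optimal
    {S A S' A' : Type*} [Fintype S] [Fintype A] [Fintype S'] [Fintype A']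
    [Nonempty S] [Nonempty A] [Nonempty S'] [Nonempty A']
    (T : S → A → S → ℝ) (R : S → A → ℝ)
    (T' : S' → A' → S' → ℝ) (R' : S' → A' → ℝ)
    (γ : ℝ) (hγ0 : 0 ≤ γ) (hγ1 : γ < 1)
    (hTnn : ∀ s a s'', 0 ≤ T s a s'') (hTsum : ∀ s a, ∑ s'' : S, T s a s'' = 1)
    (hT'nn : ∀ s a s'', 0 ≤ T' s a s'') (hT'sum : ∀ s a, ∑ s'' : S', T' s a s'' = 1)
    (f : S → S') (g : S → A → A')
    (hfsurj : Function.Surjective f) (hgsurj : ∀ s, Function.Surjective (g s))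
    (hT : ∀ s a s', T' (f s) (g s a) s' = ∑ x ∈ Finset.univ.filter (fun x => f x = s'), T s a x)
    (hR : ∀ s a, R' (f s) (g s a) = R s a)
    (Qstar : S → A → ℝ) (hQstar : Bop T R γ Qstar = Qstar)
    (Q'star : S' → A' → ℝ) (hQ'star : Bop T' R' γ Q'star = Q'star)
    (ε : ℝ) (hε : 0 ≤ ε)
    (π' : S' → A')
    (hπ' : ∀ s', Q'star s' (π' s') ≥
      Finset.univ.sup' Finset.univ_nonempty (fun a' => Q'star s' a') - ε)
    (π : S → A) (hlift : ∀ s, g s (π s) = π' (f s)) :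
    ∀ s, Qstar s (π s) ≥
      Finset.univ.sup' Finset.univ_nonempty (fun a => Qstar s a) - ε := by
  set Qlift : S → A → ℝ := fun s a => Q'star (f s) (g s a) with hQlift
  -- value function of Q'star
  set V' : S' → ℝ := fun s' => Finset.univ.sup' Finset.univ_nonempty (fun a' => Q'star s' a')
    with hV'
  -- Qlift is a fixed point of Bop T R γ
  have hsup : ∀ s : S, Finset.univ.sup' Finset.univ_nonempty (fun a => Qlift s a) = V' (f s) := by
    intro s
    exact sup'_comp_surj (g s) (hgsurj s) (fun a' => Q'star (f s) a')
  have hgroup : ∀ s a, ∑ s'' : S, T s a s'' * V' (f s'') =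
      ∑ s' : S', T' (f s) (g s a) s' * V' s' := by
    intro s a
    rw [← Finset.sum_fiberwise_of_maps_to (fun (x : S) _ => Finset.mem_univ (f x))
      (fun s'' => T s a s'' * V' (f s''))]
    apply Finset.sum_congr rfl
    intro s' _
    rw [hT, Finset.sum_mul]
    apply Finset.sum_congr rfl
    intro x hx
    rw [Finset.mem_filter] at hx
    rw [hx.2]
  have hfix : Bop T R γ Qlift = Qlift := by
    funext s a
    have := congrFun (congrFun hQ'star (f s)) (g s a)
    simp only [Bop] at this ⊢
    simp only [hsup, hgroup s a]
    rw [hR s a] at this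
    exact this
  -- contraction: Qstar = Qlift
  have hQeq : Qstar = Qlift := by
    haveI : Nonempty (S × A) := inferInstance
    set M : ℝ := (Finset.univ : Finset (S × A)).sup' Finset.univ_nonempty
      (fun p => |Qstar p.1 p.2 - Qlift p.1 p.2|) with hM
    have hMnn : 0 ≤ M := by
      rw [hM]
      obtain ⟨p⟩ := ‹Nonempty (S × A)›
      exact le_trans (abs_nonneg _)
        (Finset.le_sup' (fun p : S × A => |Qstar p.1 p.2 - Qlift p.1 p.2|) (Finset.mem_univ p))
    have hbound : ∀ s a, |Qstar s a - Qlift s a| ≤ γ * M := by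
      intro s a
      have h1 := congrFun (congrFun hQstar s) a
      have h2 := congrFun (congrFun hfix s) a
      simp only [Bop] at h1 h2
      rw [← h1, ← h2]
      have hsplit : ∑ s'' : S, T s a s'' *
          (Finset.univ.sup' Finset.univ_nonempty (fun a' => Qstar s'' a') -
           Finset.univ.sup' Finset.univ_nonempty (fun a' => Qlift s'' a')) =
          (∑ s'' : S, T s a s'' *
          Finset.univ.sup' Finset.univ_nonempty (fun a' => Qstar s'' a')) -
          (∑ s'' : S, T s a s'' *
          Finset.univ.sup' Finset.univ_nonempty (fun a' => Qlift s'' a')) := by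
        rw [← Finset.sum_sub_distrib]
        exact Finset.sum_congr rfl fun x _ => by ring
      have : (R s a + γ * ∑ s'' : S, T s a s'' *
          Finset.univ.sup' Finset.univ_nonempty (fun a' => Qstar s'' a')) -
          (R s a + γ * ∑ s'' : S, T s a s'' *
          Finset.univ.sup' Finset.univ_nonempty (fun a' => Qlift s'' a')) =
          γ * ∑ s'' : S, T s a s'' *
          (Finset.univ.sup' Finset.univ_nonempty (fun a' => Qstar s'' a') -
           Finset.univ.sup' Finset.univ_nonempty (fun a' => Qlift s'' a')) := by
        rw [hsplit]; ring
      rw [this, abs_mul, abs_of_nonneg hγ0]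
      apply mul_le_mul_of_nonneg_left _ hγ0
      calc |∑ s'' : S, T s a s'' * _| ≤ ∑ s'' : S, |T s a s'' * _| :=
            Finset.abs_sum_le_sum_abs _ _
        _ ≤ ∑ s'' : S, T s a s'' * M := by
            apply Finset.sum_le_sum
            intro s'' _
            rw [abs_mul, abs_of_nonneg (hTnn s a s'')]
            apply mul_le_mul_of_nonneg_left _ (hTnn s a s'')
            apply abs_sup'_sub_sup'_le
            intro a'
            rw [hM]
            exact Finset.le_sup' (fun p : S × A => |Qstar p.1 p.2 - Qlift p.1 p.2|)
              (Finset.mem_univ (s'', a'))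
        _ = M := by rw [← Finset.sum_mul, hTsum, one_mul]
    have hMle : M ≤ γ * M := by
      nth_rewrite 1 [hM]
      exact Finset.sup'_le _ _ fun p _ => hbound p.1 p.2
    have hM0 : M ≤ 0 := by nlinarith
    funext s a
    have := hbound s a
    have h0 : |Qstar s a - Qlift s a| ≤ 0 := by nlinarith [abs_nonneg (Qstar s a - Qlift s a)]
    have hz : Qstar s a - Qlift s a = 0 := abs_nonpos_iff.mp h0
    linarith
  intro s
  have h1 : Qstar s (π s) = Q'star (f s) (π' (f s)) := by
    rw [hQeq]; simp only [Qlift]; rw [hlift s]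
  have h2 : Finset.univ.sup' Finset.univ_nonempty (fun a => Qstar s a) = V' (f s) := by
    rw [hQeq]; exact hsup s
  rw [h1, h2]
  exact hπ' (f s)
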